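/- For a contraction (M ⇄ N via ι, π, h) and the induced maps T(ι) = ⊕ι^{⊗n}, T(π) = ⊕π^{⊗n} between reduced tensor coalgebras, with Th = ⊕_n Σ_{i=1}^n (ιπ)^{⊗(i−1)}⊗h⊗Id^{⊗(n−i)}, the identity (T(ιπ)⊗Th + Th⊗Id) ∘ 𝔞 = 𝔞 ∘ Th holds, where 𝔞 is the reduced deconcatenation coproduct; hence (T̄(M) ⇄ T̄(N) via T(ι), T(π), Th) is a coalgebra contraction. -/

import Mathlib

open TensorProduct

namespace Stmt5

variable (R : Type) [CommRing R]

/-- The tower of tensor powers: `PowObj V n = V^{⊗(n+1)}`. -/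
noncomputable def PowObj (V : Type) [AddCommGroup V] [Module R V] : ℕ → ModuleCat R
  | 0 => ModuleCat.of R V
  | n + 1 => ModuleCat.of R (V ⊗[R] (PowObj V n))

/-- `TPow R V n = V^{⊗(n+1)}`, the `n`-th component of the reduced tensor
coalgebra `T̄(V) = ⊕_{m ≥ 1} V^{⊗m}`. -/
abbrev TPow (V : Type) [AddCommGroup V] [Module R V] (n : ℕ) : Type :=
  PowObj R V n

variable {V W : Type} [AddCommGroup V] [Module R V] [AddCommGroup W] [Module R W]

/-- `f^{⊗(n+1)} : V^{⊗(n+1)} → W^{⊗(n+1)}` for a degree-zero map `f`. -/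
noncomputable def powMap (f : V →ₗ[R] W) : ∀ n, TPow R V n →ₗ[R] TPow R W n
  | 0 => f
  | n + 1 => TensorProduct.map f (powMap f n)

/-- The component `V^{⊗(n+i+2)} → V^{⊗(i+1)} ⊗ V^{⊗(n+1)}` of the (reduced)
deconcatenation coproduct `𝔞`. -/
noncomputable def splitPow :
    ∀ (i n : ℕ), TPow R V (n + i + 1) →ₗ[R] (TPow R V i) ⊗[R] (TPow R V n)
  | 0, _ => LinearMap.id
  | i + 1, n =>
    (TensorProduct.assoc R V (TPow R V i) (TPow R V n)).symm.toLinearMap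
      ∘ₗ (TensorProduct.map LinearMap.id (splitPow i n))

/-- The tensor-power extension of a sign operator `σV` (Koszul signs). -/
noncomputable def sgnPow (σV : V →ₗ[R] V) : ∀ n, TPow R V n →ₗ[R] TPow R V n
  | 0 => σV
  | n + 1 => TensorProduct.map σV (sgnPow σV n)

/-- The differential on tensor powers: `d⊗Id^{⊗n} + σ⊗d^{(n)}` (Koszul signs). -/
noncomputable def dPow (d σV : V →ₗ[R] V) : ∀ n, TPow R V n →ₗ[R] TPow R V n
  | 0 => d
  | n + 1 => TensorProduct.map d LinearMap.id + TensorProduct.map σV (dPow d σV n)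

/-- The tensor-trick homotopy `T^{n+1}h = Σ_{i} (ιπ)^{⊗(i-1)} ⊗ h ⊗ Id^{⊗(n+1-i)}`
with Koszul signs encoded via the sign operator `σV`. -/
noncomputable def Th (ι : W →ₗ[R] V) (π : V →ₗ[R] W) (σV h : V →ₗ[R] V) :
    ∀ n, TPow R V n →ₗ[R] TPow R V n
  | 0 => h
  | n + 1 =>
    TensorProduct.map h LinearMap.id
      + TensorProduct.map ((ι ∘ₗ π) ∘ₗ σV) (Th ι π σV h n)

section Helpers

variable {R}
variable {U : Type} [AddCommGroup U] [Module R U]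

lemma tmap_neg_left {M N P Q : Type} [AddCommGroup M] [Module R M]
    [AddCommGroup N] [Module R N] [AddCommGroup P] [Module R P]
    [AddCommGroup Q] [Module R Q] (f : M →ₗ[R] P) (g : N →ₗ[R] Q) :
    TensorProduct.map (-f) g = -TensorProduct.map f g := by
  apply TensorProduct.ext'; intro x y; simp [neg_tmul]

lemma tmap_sub_left {M N P Q : Type} [AddCommGroup M] [Module R M]
    [AddCommGroup N] [Module R N] [AddCommGroup P] [Module R P]
    [AddCommGroup Q] [Module R Q] (f f' : M →ₗ[R] P) (g : N →ₗ[R] Q) :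
    TensorProduct.map (f - f') g = TensorProduct.map f g - TensorProduct.map f' g := by
  apply TensorProduct.ext'; intro x y; simp [sub_tmul]

lemma tmap_sub_right {M N P Q : Type} [AddCommGroup M] [Module R M]
    [AddCommGroup N] [Module R N] [AddCommGroup P] [Module R P]
    [AddCommGroup Q] [Module R Q] (f : M →ₗ[R] P) (g g' : N →ₗ[R] Q) :
    TensorProduct.map f (g - g') = TensorProduct.map f g - TensorProduct.map f g' := by
  apply TensorProduct.ext'; intro x y; simp [tmul_sub]

lemma powMap_comp (f : V →ₗ[R] W) (g : U →ₗ[R] V) (n : ℕ) :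
    powMap R (f ∘ₗ g) n = powMap R f n ∘ₗ powMap R g n := by
  induction n with
  | zero => rfl
  | succ n ih => simp [powMap, ih, TensorProduct.map_comp]; rfl

lemma powMap_id (n : ℕ) : powMap R (LinearMap.id : V →ₗ[R] V) n = LinearMap.id := by
  induction n with
  | zero => rfl
  | succ n ih => simp [powMap, ih]; rfl

lemma splitPow_powMap (f : V →ₗ[R] W) : ∀ i n : ℕ,
    splitPow R i n ∘ₗ powMap R f (n + i + 1) =
      TensorProduct.map (powMap R f i) (powMap R f n) ∘ₗ splitPow R i n
  | 0, n => by
    show LinearMap.id ∘ₗ TensorProduct.map f (powMap R f n) =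
      TensorProduct.map f (powMap R f n) ∘ₗ LinearMap.id
    simp
  | i + 1, n => by
    have ih := splitPow_powMap f i n
    show ((TensorProduct.assoc R W (TPow R W i) (TPow R W n)).symm.toLinearMap
          ∘ₗ TensorProduct.map LinearMap.id (splitPow R i n))
        ∘ₗ TensorProduct.map f (powMap R f (n + i + 1)) =
      TensorProduct.map (TensorProduct.map f (powMap R f i)) (powMap R f n)
        ∘ₗ ((TensorProduct.assoc R V (TPow R V i) (TPow R V n)).symm.toLinearMap
          ∘ₗ TensorProduct.map LinearMap.id (splitPow R i n))
    rw [LinearMap.comp_assoc, ← TensorProduct.map_comp, LinearMap.id_comp, ih,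
      ← LinearMap.comp_id f, TensorProduct.map_comp, ← LinearMap.comp_assoc,
      ← map_map_comp_assoc_symm_eq, LinearMap.comp_assoc]
    simp

lemma dPow_powMap (f : V →ₗ[R] W) (dV σV : V →ₗ[R] V) (dW σW : W →ₗ[R] W)
    (hd : dW ∘ₗ f = f ∘ₗ dV) (hs : σW ∘ₗ f = f ∘ₗ σV) (n : ℕ) :
    dPow R dW σW n ∘ₗ powMap R f n = powMap R f n ∘ₗ dPow R dV σV n := by
  induction n with
  | zero => exact hd
  | succ n ih =>
    simp only [dPow, powMap, LinearMap.add_comp, LinearMap.comp_add]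
    change (TensorProduct.map dW LinearMap.id + TensorProduct.map σW (dPow R dW σW n)) ∘ₗ TensorProduct.map f (powMap R f n) =
      TensorProduct.map f (powMap R f n) ∘ₗ (TensorProduct.map dV LinearMap.id + TensorProduct.map σV (dPow R dV σV n))
    simp only [LinearMap.add_comp, LinearMap.comp_add]
    rw [← TensorProduct.map_comp, ← TensorProduct.map_comp, ← TensorProduct.map_comp,
      ← TensorProduct.map_comp, hd, hs, ih]
    simp only [LinearMap.comp_id, LinearMap.id_comp]

lemma Th_homotopy (ι : W →ₗ[R] V) (π : V →ₗ[R] W) (dV σV h : V →ₗ[R] V)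
    (hA : dV ∘ₗ ((ι ∘ₗ π) ∘ₗ σV) = -(((ι ∘ₗ π) ∘ₗ σV) ∘ₗ dV))
    (sA : σV ∘ₗ ((ι ∘ₗ π) ∘ₗ σV) = ι ∘ₗ π)
    (sA' : ((ι ∘ₗ π) ∘ₗ σV) ∘ₗ σV = ι ∘ₗ π)
    (c2 : ι ∘ₗ π - LinearMap.id = dV ∘ₗ h + h ∘ₗ dV)
    (sh : σV ∘ₗ h = -(h ∘ₗ σV)) (n : ℕ) :
    powMap R ι n ∘ₗ powMap R π n - LinearMap.id =
      dPow R dV σV n ∘ₗ Th R ι π σV h n + Th R ι π σV h n ∘ₗ dPow R dV σV n := by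
  induction n with
  | zero => exact c2
  | succ n ih =>
    have ihx : dPow R dV σV n ∘ₗ Th R ι π σV h n =
        (powMap R ι n ∘ₗ powMap R π n - LinearMap.id) - Th R ι π σV h n ∘ₗ dPow R dV σV n := by
      rw [ih]; abel
    have c2' : dV ∘ₗ h = (ι ∘ₗ π - LinearMap.id) - h ∘ₗ dV := by rw [c2]; abel
    simp only [powMap, dPow, Th, LinearMap.add_comp, LinearMap.comp_add]
    change TensorProduct.map ι (powMap R ι n) ∘ₗ TensorProduct.map π (powMap R π n) - (LinearMap.id : V ⊗[R] TPow R V n →ₗ[R] V ⊗[R] TPow R V n) =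
      (TensorProduct.map dV LinearMap.id + TensorProduct.map σV (dPow R dV σV n) : V ⊗[R] TPow R V n →ₗ[R] V ⊗[R] TPow R V n) ∘ₗ
          (TensorProduct.map h LinearMap.id + TensorProduct.map ((ι ∘ₗ π) ∘ₗ σV) (Th R ι π σV h n) : V ⊗[R] TPow R V n →ₗ[R] V ⊗[R] TPow R V n) +
        (TensorProduct.map h LinearMap.id + TensorProduct.map ((ι ∘ₗ π) ∘ₗ σV) (Th R ι π σV h n) : V ⊗[R] TPow R V n →ₗ[R] V ⊗[R] TPow R V n) ∘ₗ
          (TensorProduct.map dV LinearMap.id + TensorProduct.map σV (dPow R dV σV n) : V ⊗[R] TPow R V n →ₗ[R] V ⊗[R] TPow R V n)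
    simp only [LinearMap.add_comp, LinearMap.comp_add]
    rw [← TensorProduct.map_comp, ← TensorProduct.map_comp, ← TensorProduct.map_comp,
      ← TensorProduct.map_comp, ← TensorProduct.map_comp, ← TensorProduct.map_comp,
      ← TensorProduct.map_comp, ← TensorProduct.map_comp, ← TensorProduct.map_comp]
    simp only [LinearMap.comp_id, LinearMap.id_comp]
    rw [hA, sA, sA', sh, c2', ihx]
    simp only [tmap_neg_left, tmap_sub_left, tmap_sub_right, TensorProduct.map_id]
    module

lemma assoc_symm_nat {P P' Q Q' S S' : Type} [AddCommGroup P] [Module R P]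
    [AddCommGroup P'] [Module R P'] [AddCommGroup Q] [Module R Q] [AddCommGroup Q'] [Module R Q']
    [AddCommGroup S] [Module R S] [AddCommGroup S'] [Module R S']
    (f : P →ₗ[R] P') (g : Q →ₗ[R] Q') (k : S →ₗ[R] S') :
    (TensorProduct.assoc R P' Q' S').symm.toLinearMap ∘ₗ TensorProduct.map f (TensorProduct.map g k)
      = TensorProduct.map (TensorProduct.map f g) k ∘ₗ (TensorProduct.assoc R P Q S).symm.toLinearMap :=
  (map_map_comp_assoc_symm_eq f g k).symm

lemma assoc_symm_nat1 {P P' Q S : Type} [AddCommGroup P] [Module R P]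
    [AddCommGroup P'] [Module R P'] [AddCommGroup Q] [Module R Q]
    [AddCommGroup S] [Module R S] (f : P →ₗ[R] P') :
    (TensorProduct.assoc R P' Q S).symm.toLinearMap
        ∘ₗ TensorProduct.map f (LinearMap.id : Q ⊗[R] S →ₗ[R] Q ⊗[R] S)
      = TensorProduct.map (TensorProduct.map f LinearMap.id) LinearMap.id
          ∘ₗ (TensorProduct.assoc R P Q S).symm.toLinearMap := by
  simpa [TensorProduct.map_id] using assoc_symm_nat f (LinearMap.id : Q →ₗ[R] Q)
    (LinearMap.id : S →ₗ[R] S)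

lemma splitPow_Th (ι : W →ₗ[R] V) (π : V →ₗ[R] W) (σV h : V →ₗ[R] V) : ∀ i n : ℕ,
    splitPow R i n ∘ₗ Th R ι π σV h (n + i + 1) =
      (TensorProduct.map (powMap R (ι ∘ₗ π) i ∘ₗ sgnPow R σV i) (Th R ι π σV h n)
        + TensorProduct.map (Th R ι π σV h i) LinearMap.id) ∘ₗ splitPow R i n
  | 0, n => by
    have key : LinearMap.id ∘ₗ (TensorProduct.map h
            (LinearMap.id : TPow R V n →ₗ[R] TPow R V n)
          + TensorProduct.map ((ι ∘ₗ π) ∘ₗ σV) (Th R ι π σV h n))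
        = (TensorProduct.map ((ι ∘ₗ π) ∘ₗ σV) (Th R ι π σV h n)
          + TensorProduct.map h LinearMap.id) ∘ₗ LinearMap.id := by
      rw [LinearMap.id_comp, LinearMap.comp_id]
      abel
    exact key
  | i + 1, n => by
    have ih := splitPow_Th ι π σV h i n
    have e1 : TensorProduct.map h (splitPow R i n)
        = TensorProduct.map h
              (LinearMap.id : TPow R V i ⊗[R] TPow R V n →ₗ[R] TPow R V i ⊗[R] TPow R V n)
            ∘ₗ TensorProduct.map (LinearMap.id : V →ₗ[R] V) (splitPow R i n) := by
      rw [← TensorProduct.map_comp, LinearMap.comp_id, LinearMap.id_comp]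
    have e2 : TensorProduct.map ((ι ∘ₗ π) ∘ₗ σV)
          (TensorProduct.map (powMap R (ι ∘ₗ π) i ∘ₗ sgnPow R σV i) (Th R ι π σV h n) ∘ₗ splitPow R i n)
        = TensorProduct.map ((ι ∘ₗ π) ∘ₗ σV)
            (TensorProduct.map (powMap R (ι ∘ₗ π) i ∘ₗ sgnPow R σV i) (Th R ι π σV h n))
          ∘ₗ TensorProduct.map (LinearMap.id : V →ₗ[R] V) (splitPow R i n) := by
      rw [← TensorProduct.map_comp, LinearMap.comp_id]
    have e3 : TensorProduct.map ((ι ∘ₗ π) ∘ₗ σV)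
          (TensorProduct.map (Th R ι π σV h i) LinearMap.id ∘ₗ splitPow R i n)
        = TensorProduct.map ((ι ∘ₗ π) ∘ₗ σV)
            (TensorProduct.map (Th R ι π σV h i) LinearMap.id)
          ∘ₗ TensorProduct.map (LinearMap.id : V →ₗ[R] V) (splitPow R i n) := by
      rw [← TensorProduct.map_comp, LinearMap.comp_id]
    have e4 : TensorProduct.map ((ι ∘ₗ π) ∘ₗ σV) (powMap R (ι ∘ₗ π) i ∘ₗ sgnPow R σV i)
        = TensorProduct.map (ι ∘ₗ π) (powMap R (ι ∘ₗ π) i) ∘ₗ TensorProduct.map σV (sgnPow R σV i) :=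
      TensorProduct.map_comp _ _ _ _
    have key : ((TensorProduct.assoc R V (TPow R V i) (TPow R V n)).symm.toLinearMap
          ∘ₗ TensorProduct.map LinearMap.id (splitPow R i n))
        ∘ₗ (TensorProduct.map h
              (LinearMap.id : TPow R V (n + i + 1) →ₗ[R] TPow R V (n + i + 1))
          + TensorProduct.map ((ι ∘ₗ π) ∘ₗ σV) (Th R ι π σV h (n + i + 1)))
      = (TensorProduct.map
            (TensorProduct.map (ι ∘ₗ π) (powMap R (ι ∘ₗ π) i) ∘ₗ TensorProduct.map σV (sgnPow R σV i))
            (Th R ι π σV h n)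
          + TensorProduct.map
              (TensorProduct.map h (LinearMap.id : TPow R V i →ₗ[R] TPow R V i)
                + TensorProduct.map ((ι ∘ₗ π) ∘ₗ σV) (Th R ι π σV h i))
              (LinearMap.id : TPow R V n →ₗ[R] TPow R V n))
        ∘ₗ ((TensorProduct.assoc R V (TPow R V i) (TPow R V n)).symm.toLinearMap
          ∘ₗ TensorProduct.map LinearMap.id (splitPow R i n)) := by
      rw [LinearMap.comp_assoc, LinearMap.comp_add, ← TensorProduct.map_comp,
        ← TensorProduct.map_comp, LinearMap.id_comp, LinearMap.id_comp, LinearMap.comp_id, ih,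
        LinearMap.add_comp, TensorProduct.map_add_right, e1, e2, e3,
        LinearMap.comp_add, LinearMap.comp_add,
        ← LinearMap.comp_assoc, ← LinearMap.comp_assoc, ← LinearMap.comp_assoc,
        assoc_symm_nat1, assoc_symm_nat, assoc_symm_nat, e4,
        LinearMap.add_comp, TensorProduct.map_add_left, LinearMap.add_comp,
        LinearMap.comp_assoc, LinearMap.comp_assoc, LinearMap.comp_assoc]
      abel
    exact key

lemma powMap_Th_zero (ι : W →ₗ[R] V) (π : V →ₗ[R] W) (σV h : V →ₗ[R] V)
    (c3 : π ∘ₗ h = 0) (n : ℕ) :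
    powMap R π n ∘ₗ Th R ι π σV h n = 0 := by
  induction n with
  | zero => exact c3
  | succ n ih =>
    simp only [powMap, Th, LinearMap.comp_add]
    change TensorProduct.map π (powMap R π n) ∘ₗ (TensorProduct.map h LinearMap.id + TensorProduct.map ((ι ∘ₗ π) ∘ₗ σV) (Th R ι π σV h n) : V ⊗[R] TPow R V n →ₗ[R] V ⊗[R] TPow R V n) = 0
    simp only [LinearMap.comp_add]
    rw [← TensorProduct.map_comp, ← TensorProduct.map_comp, c3, ih]
    simp

lemma Th_powMap_zero (ι : W →ₗ[R] V) (π : V →ₗ[R] W) (σV h : V →ₗ[R] V)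
    (c4 : h ∘ₗ ι = 0) (n : ℕ) :
    Th R ι π σV h n ∘ₗ powMap R ι n = 0 := by
  induction n with
  | zero => exact c4
  | succ n ih =>
    simp only [powMap, Th, LinearMap.add_comp]
    change (TensorProduct.map h LinearMap.id + TensorProduct.map ((ι ∘ₗ π) ∘ₗ σV) (Th R ι π σV h n) : V ⊗[R] TPow R V n →ₗ[R] V ⊗[R] TPow R V n) ∘ₗ TensorProduct.map ι (powMap R ι n) = 0
    simp only [LinearMap.add_comp]
    rw [← TensorProduct.map_comp, ← TensorProduct.map_comp, c4, ih]
    simp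

lemma Th_Th_zero (ι : W →ₗ[R] V) (π : V →ₗ[R] W) (σV h : V →ₗ[R] V)
    (c5 : h ∘ₗ h = 0) (z1 : h ∘ₗ ((ι ∘ₗ π) ∘ₗ σV) = 0)
    (z2 : ((ι ∘ₗ π) ∘ₗ σV) ∘ₗ h = 0) (n : ℕ) :
    Th R ι π σV h n ∘ₗ Th R ι π σV h n = 0 := by
  induction n with
  | zero => exact c5
  | succ n ih =>
    simp only [Th, LinearMap.add_comp, LinearMap.comp_add]
    change (TensorProduct.map h LinearMap.id + TensorProduct.map ((ι ∘ₗ π) ∘ₗ σV) (Th R ι π σV h n) : V ⊗[R] TPow R V n →ₗ[R] V ⊗[R] TPow R V n) ∘ₗ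
      (TensorProduct.map h LinearMap.id + TensorProduct.map ((ι ∘ₗ π) ∘ₗ σV) (Th R ι π σV h n) : V ⊗[R] TPow R V n →ₗ[R] V ⊗[R] TPow R V n) = 0
    simp only [LinearMap.add_comp, LinearMap.comp_add]
    rw [← TensorProduct.map_comp, ← TensorProduct.map_comp, ← TensorProduct.map_comp,
      ← TensorProduct.map_comp, c5, z1, z2, ih]
    simp

end Helpers

/-- tensor trick: for a contraction `(M ⇄ N via ι, π, h)` the
identity `(T(ιπ)⊗Th + Th⊗Id) ∘ 𝔞 = 𝔞 ∘ Th` holds (stated componentwise on each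
`N^{⊗(n+i+2)}` with splitting `𝔞`-components `splitPow i n`); hence
`(T̄(M) ⇄ T̄(N) via T(ι), T(π), Th)` is a coalgebra contraction (contraction
axioms and compatibility of `T(ι)`, `T(π)` with the coproduct are stated
componentwise as well). -/
theorem stmt5 {M N : Type} [AddCommGroup M] [Module R M] [AddCommGroup N] [Module R N]
    (dM : M →ₗ[R] M) (dN : N →ₗ[R] N)
    (hdM : dM ∘ₗ dM = 0) (hdN : dN ∘ₗ dN = 0)
    (ι : M →ₗ[R] N) (π : N →ₗ[R] M) (h : N →ₗ[R] N)
    (hι : dN ∘ₗ ι = ι ∘ₗ dM) (hπ : dM ∘ₗ π = π ∘ₗ dN)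
    (c1 : π ∘ₗ ι = LinearMap.id)
    (c2 : ι ∘ₗ π - LinearMap.id = dN ∘ₗ h + h ∘ₗ dN)
    (c3 : π ∘ₗ h = 0) (c4 : h ∘ₗ ι = 0) (c5 : h ∘ₗ h = 0)
    -- sign operators encoding the grading
    (σM : M →ₗ[R] M) (σN : N →ₗ[R] N)
    (sM : σM ∘ₗ σM = LinearMap.id) (sN : σN ∘ₗ σN = LinearMap.id)
    (sdM : σM ∘ₗ dM = -(dM ∘ₗ σM)) (sdN : σN ∘ₗ dN = -(dN ∘ₗ σN))
    (sh : σN ∘ₗ h = -(h ∘ₗ σN))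
    (sι : σN ∘ₗ ι = ι ∘ₗ σM) (sπ : π ∘ₗ σN = σM ∘ₗ π) :
    -- (1) the coalgebra-homotopy identity `(T(ιπ)⊗Th + Th⊗Id) ∘ 𝔞 = 𝔞 ∘ Th`:
    (∀ i n : ℕ,
      splitPow R i n ∘ₗ Th R ι π σN h (n + i + 1) =
        (TensorProduct.map (powMap R (ι ∘ₗ π) i ∘ₗ sgnPow R σN i) (Th R ι π σN h n)
          + TensorProduct.map (Th R ι π σN h i) LinearMap.id) ∘ₗ splitPow R i n) ∧
    -- (2) `T(ι)` and `T(π)` are morphisms of graded coalgebras: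
    (∀ i n : ℕ,
      splitPow R i n ∘ₗ powMap R ι (n + i + 1) =
        TensorProduct.map (powMap R ι i) (powMap R ι n) ∘ₗ splitPow R i n) ∧
    (∀ i n : ℕ,
      splitPow R i n ∘ₗ powMap R π (n + i + 1) =
        TensorProduct.map (powMap R π i) (powMap R π n) ∘ₗ splitPow R i n) ∧
    -- (3) `(T̄(M) ⇄ T̄(N) via T(ι), T(π), Th)` is a contraction:
    (∀ n : ℕ, dPow R dM σM n ∘ₗ powMap R π n = powMap R π n ∘ₗ dPow R dN σN n) ∧
    (∀ n : ℕ, dPow R dN σN n ∘ₗ powMap R ι n = powMap R ι n ∘ₗ dPow R dM σM n) ∧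
    (∀ n : ℕ, powMap R π n ∘ₗ powMap R ι n = LinearMap.id) ∧
    (∀ n : ℕ,
      powMap R ι n ∘ₗ powMap R π n - LinearMap.id =
        dPow R dN σN n ∘ₗ Th R ι π σN h n + Th R ι π σN h n ∘ₗ dPow R dN σN n) ∧
    (∀ n : ℕ, powMap R π n ∘ₗ Th R ι π σN h n = 0) ∧
    (∀ n : ℕ, Th R ι π σN h n ∘ₗ powMap R ι n = 0) ∧
    (∀ n : ℕ, Th R ι π σN h n ∘ₗ Th R ι π σN h n = 0) := by
  have hιx : ∀ x, dN (ι x) = ι (dM x) := fun x => LinearMap.congr_fun hι x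
  have hπx : ∀ x, dM (π x) = π (dN x) := fun x => LinearMap.congr_fun hπ x
  have sιx : ∀ x, σN (ι x) = ι (σM x) := fun x => LinearMap.congr_fun sι x
  have sπx : ∀ x, π (σN x) = σM (π x) := fun x => LinearMap.congr_fun sπ x
  have sMx : ∀ x, σM (σM x) = x := fun x => LinearMap.congr_fun sM x
  have sNx : ∀ x, σN (σN x) = x := fun x => LinearMap.congr_fun sN x
  have sdNx : ∀ x, σN (dN x) = -(dN (σN x)) := fun x => by
    simpa using LinearMap.congr_fun sdN x
  have shx : ∀ x, σN (h x) = -(h (σN x)) := fun x => by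
    simpa using LinearMap.congr_fun sh x
  have c3x : ∀ x, π (h x) = 0 := fun x => by
    simpa using LinearMap.congr_fun c3 x
  have c4x : ∀ x, h (ι x) = 0 := fun x => by
    simpa using LinearMap.congr_fun c4 x
  have hA : dN ∘ₗ ((ι ∘ₗ π) ∘ₗ σN) = -(((ι ∘ₗ π) ∘ₗ σN) ∘ₗ dN) := by
    ext x
    simp only [LinearMap.comp_apply, LinearMap.neg_apply]
    rw [hιx, hπx, sdNx]
    simp
  have sA : σN ∘ₗ ((ι ∘ₗ π) ∘ₗ σN) = ι ∘ₗ π := by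
    ext x
    simp only [LinearMap.comp_apply]
    rw [sιx, sπx, sMx]
  have sA' : ((ι ∘ₗ π) ∘ₗ σN) ∘ₗ σN = ι ∘ₗ π := by
    ext x
    simp only [LinearMap.comp_apply]
    rw [sNx]
  have z1 : h ∘ₗ ((ι ∘ₗ π) ∘ₗ σN) = 0 := by
    ext x
    simp only [LinearMap.comp_apply, LinearMap.zero_apply]
    rw [c4x]
  have z2 : ((ι ∘ₗ π) ∘ₗ σN) ∘ₗ h = 0 := by
    ext x
    simp only [LinearMap.comp_apply, LinearMap.zero_apply]
    rw [shx]
    simp [c3x]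
  refine ⟨splitPow_Th ι π σN h, splitPow_powMap ι, splitPow_powMap π,
    fun n => dPow_powMap π dN σN dM σM hπ sπ.symm n,
    fun n => dPow_powMap ι dM σM dN σN hι sι n,
    fun n => ?_,
    fun n => Th_homotopy ι π dN σN h hA sA sA' c2 sh n,
    fun n => powMap_Th_zero ι π σN h c3 n,
    fun n => Th_powMap_zero ι π σN h c4 n,
    fun n => Th_Th_zero ι π σN h c5 z1 z2 n⟩
  rw [← powMap_comp, c1, powMap_id]

end Stmt5
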